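/- For any 2N×2N complex matrices A and B, the averages over the compact symplectic group SP(2N) with respect to normalized Haar measure satisfy: ⟨Tr(U*AUB)⟩ = (1/(2N))·Tr(A)·Tr(B); ⟨Tr(UᵗAUB)⟩ = (1/(2N))·Tr(IA)·Tr(I*B); ⟨Tr(UAUB)⟩ = ⟨Tr(U*AU*B)⟩ = (1/(2N))·Tr(A·I·Bᵗ·I); and ⟨Tr(ŪAUB)⟩ = (1/(2N))·Tr(A·Bᵗ). -/

import Mathlib

open MeasureTheory Matrix
open scoped ComplexConjugate

noncomputable instance (m n α : Type*) [MeasurableSpace α] : MeasurableSpace (Matrix m n α) :=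
  (inferInstance : MeasurableSpace (m → n → α))

/-- The `2N×2N` matrix `I` with `N×N` blocks `(0, -1; 1, 0)`. -/
def Imat (N : ℕ) : Matrix (Fin N ⊕ Fin N) (Fin N ⊕ Fin N) ℂ :=
  Matrix.fromBlocks 0 (-1) 1 0

namespace SympAux

variable {N : ℕ}

abbrev nn (N : ℕ) := Fin N ⊕ Fin N
abbrev Mat (N : ℕ) := Matrix (nn N) (nn N) ℂ

lemma meas_entry (a b : nn N) : Measurable fun U : Mat N => U a b :=
  (measurable_pi_apply b).comp (measurable_pi_apply a)

lemma meas_mul_left (S : Mat N) : Measurable fun U : Mat N => S * U := by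
  apply measurable_pi_lambda
  intro a
  apply measurable_pi_lambda
  intro b
  have : (fun U : Mat N => (S * U) a b) = fun U => ∑ e, S a e * U e b := by
    funext U; simp [Matrix.mul_apply]
  show Measurable fun U : Mat N => (S * U) a b
  rw [this]
  exact Finset.measurable_sum _ fun e _ => (meas_entry e b).const_mul _

lemma entry_bound (μ : Measure (Mat N))
    (hmem : ∀ᵐ U ∂μ, Uᴴ * U = 1 ∧ Uᵀ * Imat N * U = Imat N) (a b : nn N) :
    ∀ᵐ U ∂μ, ‖U a b‖ ≤ 1 := by
  filter_upwards [hmem] with U hU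
  have h1 : (Uᴴ * U) b b = (1 : Mat N) b b := by rw [hU.1]
  rw [Matrix.mul_apply, Matrix.one_apply_eq] at h1
  have h2 : ∑ c, (‖U c b‖ ^ 2 : ℝ) = 1 := by
    have : ((∑ c, (‖U c b‖ ^ 2 : ℝ) : ℝ) : ℂ) = ((1 : ℝ) : ℂ) := by
      push_cast
      rw [← h1]
      refine Finset.sum_congr rfl fun c _ => ?_
      rw [Matrix.conjTranspose_apply]
      rw [Complex.star_def, ← Complex.normSq_eq_conj_mul_self, Complex.normSq_eq_norm_sq]
      norm_cast
    exact_mod_cast this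
  have h3 : ‖U a b‖ ^ 2 ≤ 1 := by
    rw [← h2]
    exact Finset.single_le_sum (f := fun c => (‖U c b‖^2 : ℝ)) (fun c _ => sq_nonneg _) (Finset.mem_univ a)
  nlinarith [norm_nonneg (U a b)]

variable {μ : Measure (Mat N)} [IsProbabilityMeasure μ]

lemma integrable_two (hmem : ∀ᵐ U ∂μ, Uᴴ * U = 1 ∧ Uᵀ * Imat N * U = Imat N)
    {f : Mat N → ℂ} (hf : Measurable f)
    (hb : ∀ᵐ U ∂μ, ‖f U‖ ≤ 1) : Integrable f μ :=
  ⟨hf.aestronglyMeasurable, HasFiniteIntegral.of_bounded hb⟩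

lemma bound_mul (hmem : ∀ᵐ U ∂μ, Uᴴ * U = 1 ∧ Uᵀ * Imat N * U = Imat N) (a b c d : nn N) :
    ∀ᵐ U ∂μ, ‖U a b * U c d‖ ≤ 1 := by
  filter_upwards [entry_bound μ hmem a b, entry_bound μ hmem c d] with U h1 h2
  rw [norm_mul]
  calc ‖U a b‖ * ‖U c d‖ ≤ 1 * 1 := by
        exact mul_le_mul h1 h2 (norm_nonneg _) zero_le_one
    _ = 1 := by ring

lemma integrable_mul (hmem : ∀ᵐ U ∂μ, Uᴴ * U = 1 ∧ Uᵀ * Imat N * U = Imat N) (a b c d : nn N) :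
    Integrable (fun U : Mat N => U a b * U c d) μ :=
  integrable_two hmem ((meas_entry a b).mul (meas_entry c d)) (bound_mul hmem a b c d)

lemma integrable_mul_conj (hmem : ∀ᵐ U ∂μ, Uᴴ * U = 1 ∧ Uᵀ * Imat N * U = Imat N)
    (a b c d : nn N) :
    Integrable (fun U : Mat N => U a b * conj (U c d)) μ := by
  refine integrable_two hmem ((meas_entry a b).mul ((Complex.continuous_conj.measurable.comp (meas_entry c d)) : Measurable fun U : Mat N => conj (U c d))) ?_
  filter_upwards [bound_mul hmem a b c d] with U h
  simpa [norm_mul] using h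

/-- Generalized permutation matrix. -/
def GP (σ : Equiv.Perm (nn N)) (w : nn N → ℂ) : Mat N :=
  Matrix.of fun a b => if a = σ b then w b else 0

lemma GP_mul_apply (σ : Equiv.Perm (nn N)) (w : nn N → ℂ) (U : Mat N) (a b : nn N) :
    (GP σ w * U) a b = w (σ.symm a) * U (σ.symm a) b := by
  rw [Matrix.mul_apply]
  rw [Finset.sum_eq_single (σ.symm a)]
  · simp [GP]
  · intro e _ he
    have : a ≠ σ e := by
      intro h
      exact he (by simp [h])
    simp [GP, this]
  · simp

lemma GP_unitary (σ : Equiv.Perm (nn N)) (w : nn N → ℂ) (hw : ∀ b, conj (w b) * w b = 1) :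
    (GP σ w)ᴴ * GP σ w = 1 := by
  ext b c
  rw [Matrix.mul_apply]
  rw [Finset.sum_eq_single (σ b)]
  · by_cases h : b = c
    · subst h
      simp [GP, Matrix.conjTranspose_apply, Matrix.one_apply_eq, hw b]
    · have h2 : σ b ≠ σ c := fun hh => h (σ.injective hh)
      simp [GP, Matrix.conjTranspose_apply, Matrix.one_apply_ne h, h2]
  · intro e _ he
    simp [GP, Matrix.conjTranspose_apply, he]
  · simp

lemma GP_symp (σ : Equiv.Perm (nn N)) (w : nn N → ℂ)
    (hw : ∀ b c, w b * Imat N (σ b) (σ c) * w c = Imat N b c) :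
    (GP σ w)ᵀ * Imat N * GP σ w = Imat N := by
  ext b c
  rw [Matrix.mul_assoc, Matrix.mul_apply]
  rw [Finset.sum_eq_single (σ b)]
  · rw [Matrix.transpose_apply, Matrix.mul_apply, Finset.sum_eq_single (σ c)]
    · have : GP σ w (σ b) b = w b := by simp [GP]
      have h2 : GP σ w (σ c) c = w c := by simp [GP]
      rw [this, h2, ← hw b c]
      ring
    · intro e _ he
      simp [GP, he]
    · simp
  · intro e _ he
    have : GP σ w e b = 0 := by simp [GP, he]
    simp [Matrix.transpose_apply, this]
  · simp

lemma integral_inv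
    (hinv : ∀ S : Mat N, Sᴴ * S = 1 → Sᵀ * Imat N * S = Imat N →
      μ.map (fun U => S * U) = μ)
    {S : Mat N} (h1 : Sᴴ * S = 1) (h2 : Sᵀ * Imat N * S = Imat N)
    {f : Mat N → ℂ} (hf : AEStronglyMeasurable f μ) :
    ∫ U, f (S * U) ∂μ = ∫ U, f U ∂μ := by
  conv_rhs => rw [← hinv S h1 h2]
  rw [integral_map (meas_mul_left S).aemeasurable]
  rwa [hinv S h1 h2]

lemma constraint1
    (hinv : ∀ S : Mat N, Sᴴ * S = 1 → Sᵀ * Imat N * S = Imat N →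
      μ.map (fun U => S * U) = μ)
    (σ : Equiv.Perm (nn N)) (w : nn N → ℂ)
    (h1 : (GP σ w)ᴴ * GP σ w = 1) (h2 : (GP σ w)ᵀ * Imat N * GP σ w = Imat N)
    (c a d b : nn N) :
    ∫ U, U c d * conj (U a b) ∂μ =
      w (σ.symm c) * conj (w (σ.symm a)) *
        ∫ U, U (σ.symm c) d * conj (U (σ.symm a) b) ∂μ := by
  have hmeas : AEStronglyMeasurable (fun U : Mat N => U c d * conj (U a b)) μ :=
    ((meas_entry c d).mul
      ((Complex.continuous_conj.measurable.comp (meas_entry a b)) :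
        Measurable fun U : Mat N => conj (U a b))).aestronglyMeasurable
  have := integral_inv hinv h1 h2 hmeas
  rw [← this]
  rw [show (fun U : Mat N => (GP σ w * U) c d * conj ((GP σ w * U) a b)) =
      fun U : Mat N => (w (σ.symm c) * conj (w (σ.symm a))) *
        (U (σ.symm c) d * conj (U (σ.symm a) b)) from ?_]
  · rw [MeasureTheory.integral_const_mul]
  · funext U
    rw [GP_mul_apply, GP_mul_apply, RingHom.map_mul]
    ring

lemma constraint2
    (hinv : ∀ S : Mat N, Sᴴ * S = 1 → Sᵀ * Imat N * S = Imat N →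
      μ.map (fun U => S * U) = μ)
    (σ : Equiv.Perm (nn N)) (w : nn N → ℂ)
    (h1 : (GP σ w)ᴴ * GP σ w = 1) (h2 : (GP σ w)ᵀ * Imat N * GP σ w = Imat N)
    (c a d b : nn N) :
    ∫ U, U c d * U a b ∂μ =
      w (σ.symm c) * w (σ.symm a) * ∫ U, U (σ.symm c) d * U (σ.symm a) b ∂μ := by
  have hmeas : AEStronglyMeasurable (fun U : Mat N => U c d * U a b) μ :=
    ((meas_entry c d).mul (meas_entry a b)).aestronglyMeasurable
  have := integral_inv hinv h1 h2 hmeas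
  rw [← this]
  rw [show (fun U : Mat N => (GP σ w * U) c d * ((GP σ w * U) a b)) =
      fun U : Mat N => (w (σ.symm c) * w (σ.symm a)) *
        (U (σ.symm c) d * U (σ.symm a) b) from ?_]
  · rw [MeasureTheory.integral_const_mul]
  · funext U
    rw [GP_mul_apply, GP_mul_apply]
    ring

@[simp] lemma Imat_ll (p q : Fin N) : Imat N (Sum.inl p) (Sum.inl q) = 0 := by
  simp [Imat]
@[simp] lemma Imat_lr (p q : Fin N) :
    Imat N (Sum.inl p) (Sum.inr q) = -(if p = q then 1 else 0) := by
  simp [Imat, Matrix.one_apply]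
@[simp] lemma Imat_rl (p q : Fin N) :
    Imat N (Sum.inr p) (Sum.inl q) = if p = q then 1 else 0 := by
  simp [Imat, Matrix.one_apply]
@[simp] lemma Imat_rr (p q : Fin N) : Imat N (Sum.inr p) (Sum.inr q) = 0 := by
  simp [Imat]

lemma Imat_antisymm (a b : nn N) : Imat N a b = -Imat N b a := by
  rcases a with p | p <;> rcases b with q | q <;> simp [eq_comm]

lemma Imat_conj (a b : nn N) : conj (Imat N a b) = Imat N a b := by
  rcases a with p | p <;> rcases b with q | q <;> simp [apply_ite]

/-- phase weights -/
def phasew (p : Fin N) : nn N → ℂ :=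
  Sum.elim (fun q => if q = p then Complex.I else 1) fun q => if q = p then -Complex.I else 1

@[simp] lemma phasew_l (p q : Fin N) :
    phasew p (Sum.inl q) = if q = p then Complex.I else 1 := rfl
@[simp] lemma phasew_r (p q : Fin N) :
    phasew p (Sum.inr q) = if q = p then -Complex.I else 1 := rfl

lemma phasew_unitary (p : Fin N) : (GP 1 (phasew p))ᴴ * GP 1 (phasew p) = 1 := by
  apply GP_unitary
  intro b
  rcases b with q | q <;> simp only [phasew_l, phasew_r] <;> split_ifs <;>
    simp only [Complex.conj_I, _root_.map_one, map_neg] <;> ring_nf <;> simp [Complex.I_sq]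

lemma phasew_symp (p : Fin N) : (GP 1 (phasew p))ᵀ * Imat N * GP 1 (phasew p) = Imat N := by
  apply GP_symp
  intro b c
  simp only [Equiv.Perm.coe_one, id_eq]
  rcases b with q | q <;> rcases c with r | r
  · simp
  · by_cases h : q = r
    · subst h
      by_cases hp : q = p
      · subst hp; simp
      · simp [hp]
    · simp [h]
  · by_cases h : q = r
    · subst h
      by_cases hp : q = p
      · subst hp; simp
      · simp [hp]
    · simp [h]
  · simp

/-- swap permutation -/
def swapσ (p q : Fin N) : Equiv.Perm (nn N) :=
  Equiv.sumCongr (Equiv.swap p q) (Equiv.swap p q)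

lemma swap_unitary (p q : Fin N) :
    (GP (swapσ p q) 1)ᴴ * GP (swapσ p q) 1 = 1 := by
  apply GP_unitary; intro b; simp

lemma swap_symp (p q : Fin N) :
    (GP (swapσ p q) 1)ᵀ * Imat N * GP (swapσ p q) 1 = Imat N := by
  apply GP_symp
  intro b c
  rcases b with r | r <;> rcases c with s | s <;>
    simp [swapσ, Equiv.swap_apply_def] <;> split_ifs <;> simp_all

/-- Imat as generalized permutation -/
def Iσ : Equiv.Perm (nn N) := Equiv.sumComm (Fin N) (Fin N)
def Iw : nn N → ℂ := Sum.elim (fun _ => 1) fun _ => -1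

@[simp] lemma Iσ_l (p : Fin N) : (Iσ (N := N)) (Sum.inl p) = Sum.inr p := rfl
@[simp] lemma Iσ_r (p : Fin N) : (Iσ (N := N)) (Sum.inr p) = Sum.inl p := rfl
@[simp] lemma Iσ_symm_l (p : Fin N) : (Iσ (N := N)).symm (Sum.inl p) = Sum.inr p := rfl
@[simp] lemma Iσ_symm_r (p : Fin N) : (Iσ (N := N)).symm (Sum.inr p) = Sum.inl p := rfl
@[simp] lemma Iw_l (p : Fin N) : (Iw (N := N)) (Sum.inl p) = 1 := rfl
@[simp] lemma Iw_r (p : Fin N) : (Iw (N := N)) (Sum.inr p) = -1 := rfl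

lemma Imat_unitary : (GP (Iσ (N := N)) Iw)ᴴ * GP Iσ Iw = 1 := by
  apply GP_unitary; intro b; rcases b with p | p <;> simp

lemma Imat_symp : (GP (Iσ (N := N)) Iw)ᵀ * Imat N * GP Iσ Iw = Imat N := by
  apply GP_symp
  intro b c
  rcases b with p | p <;> rcases c with q | q <;> simp [eq_comm] <;> split_ifs <;> norm_num

lemma I_ne_one' : Complex.I ≠ 1 := by
  intro h
  have := congrArg Complex.im h
  simp at this

lemma factor_zero {t x : ℂ} (h : x = t * x) (ht : t ≠ 1) : x = 0 := by
  have h2 : (1 - t) * x = 0 := by linear_combination h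
  rcases mul_eq_zero.mp h2 with h' | h'
  · exact absurd (by linear_combination -h') ht
  · exact h'

section Moments

variable (hinv : ∀ S : Mat N, Sᴴ * S = 1 → Sᵀ * Imat N * S = Imat N →
      μ.map (fun U => S * U) = μ)

include hinv

lemma E1phase (p : Fin N) (c a d b : nn N) :
    ∫ U, U c d * conj (U a b) ∂μ =
      phasew p c * conj (phasew p a) * ∫ U, U c d * conj (U a b) ∂μ := by
  simpa [Equiv.Perm.one_symm] using constraint1 hinv 1 (phasew p) (phasew_unitary p) (phasew_symp p) c a d b

lemma E1off (c a d b : nn N) (hca : c ≠ a) : ∫ U, U c d * conj (U a b) ∂μ = 0 := by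
  rcases c with p | p
  · refine factor_zero (E1phase hinv p (Sum.inl p) a d b) ?_
    rcases a with q | q
    · have hq : ¬ q = p := fun h => hca (by rw [h])
      simp [hq, I_ne_one']
    · by_cases hq : q = p
      · subst hq
        simp [Complex.conj_I, Complex.I_mul_I]
        norm_num
      · simp [hq, I_ne_one']
  · refine factor_zero (E1phase hinv p (Sum.inr p) a d b) ?_
    rcases a with q | q
    · by_cases hq : q = p
      · subst hq
        simp [Complex.conj_I, Complex.I_mul_I]
        norm_num
      · simp [hq]
        intro h
        have := congrArg Complex.im h
        simp at this
    · have hq : ¬ q = p := fun h => hca (by rw [h])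
      simp [hq]
      intro h
      have := congrArg Complex.im h
      simp at this

lemma E1swap (p q : Fin N) (d b : nn N) :
    ∫ U, U (Sum.inl p) d * conj (U (Sum.inl p) b) ∂μ =
      ∫ U, U (Sum.inl q) d * conj (U (Sum.inl q) b) ∂μ := by
  have := constraint1 hinv (swapσ p q) 1 (swap_unitary p q) (swap_symp p q)
    (Sum.inl p) (Sum.inl p) d b
  simpa [swapσ, Equiv.swap_apply_left] using this

lemma E1flip (p : Fin N) (d b : nn N) :
    ∫ U, U (Sum.inl p) d * conj (U (Sum.inl p) b) ∂μ =
      ∫ U, U (Sum.inr p) d * conj (U (Sum.inr p) b) ∂μ := by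
  have := constraint1 hinv Iσ Iw Imat_unitary Imat_symp (Sum.inl p) (Sum.inl p) d b
  simpa using this

lemma E1diag (c c' d b : nn N) :
    ∫ U, U c d * conj (U c b) ∂μ = ∫ U, U c' d * conj (U c' b) ∂μ := by
  have key : ∀ x : nn N, ∃ p : Fin N,
      ∫ U, U x d * conj (U x b) ∂μ = ∫ U, U (Sum.inl p) d * conj (U (Sum.inl p) b) ∂μ := by
    intro x
    rcases x with p | p
    · exact ⟨p, rfl⟩
    · exact ⟨p, (E1flip hinv p d b).symm⟩
  obtain ⟨p, hp⟩ := key c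
  obtain ⟨q, hq⟩ := key c'
  rw [hp, hq, E1swap hinv p q d b]

variable (hmem : ∀ᵐ U ∂μ, Uᴴ * U = 1 ∧ Uᵀ * Imat N * U = Imat N)

include hmem

lemma E1sum (d b : nn N) :
    ∑ c : nn N, ∫ U, U c d * conj (U c b) ∂μ = if b = d then 1 else 0 := by
  rw [← integral_finset_sum _ (fun c _ => integrable_mul_conj hmem c d c b)]
  rw [integral_congr_ae (g := fun _ => if b = d then (1 : ℂ) else 0)]
  · simp
  · filter_upwards [hmem] with U hU
    have h1 : (Uᴴ * U) b d = (1 : Mat N) b d := by rw [hU.1]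
    rw [Matrix.mul_apply] at h1
    simp only [Matrix.conjTranspose_apply] at h1
    rw [Matrix.one_apply] at h1
    rw [← h1]
    refine Finset.sum_congr rfl fun c _ => ?_
    rw [Complex.star_def]
    ring

lemma E1 (hN : 0 < N) (c a d b : nn N) :
    ∫ U, U c d * conj (U a b) ∂μ =
      (if c = a then 1 else 0) * (if d = b then 1 else 0) / (2 * N) := by
  have h2N : (2 * (N : ℂ)) ≠ 0 := by
    simp [Nat.cast_ne_zero]
    omega
  by_cases hca : c = a
  · subst hca
    have hsum := E1sum hinv hmem d b
    rw [Finset.sum_congr rfl fun x _ => E1diag hinv x (Sum.inl ⟨0, hN⟩) d b] at hsum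
    rw [Finset.sum_const, Finset.card_univ] at hsum
    have hcard : (Fintype.card (nn N) : ℂ) = 2 * N := by
      simp [Fintype.card_sum]
      ring
    have hsmul : (Fintype.card (nn N) : ℂ) *
        (∫ U, U (Sum.inl (⟨0, hN⟩ : Fin N)) d * conj (U (Sum.inl ⟨0, hN⟩) b) ∂μ) =
        if b = d then 1 else 0 := by
      rw [← hsum]
      simp [nsmul_eq_mul]
    rw [hcard] at hsmul
    rw [E1diag hinv c (Sum.inl ⟨0, hN⟩) d b]
    rw [if_pos rfl]
    rw [eq_div_iff h2N, one_mul]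
    rw [mul_comm, hsmul]
    by_cases hdb : d = b
    · subst hdb
      simp
    · simp [hdb, (Ne.symm hdb : b ≠ d)]
  · rw [E1off hinv c a d b hca, if_neg hca]
    simp

omit hmem

lemma E2phase (p : Fin N) (c a d b : nn N) :
    ∫ U, U c d * U a b ∂μ =
      phasew p c * phasew p a * ∫ U, U c d * U a b ∂μ := by
  simpa [Equiv.Perm.one_symm] using constraint2 hinv 1 (phasew p) (phasew_unitary p) (phasew_symp p) c a d b

lemma E2off (c a d b : nn N) (hca : a ≠ Iσ c) : ∫ U, U c d * U a b ∂μ = 0 := by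
  rcases c with p | p
  · refine factor_zero (E2phase hinv p (Sum.inl p) a d b) ?_
    rcases a with q | q
    · by_cases hq : q = p
      · subst hq
        simp [Complex.I_mul_I]
        norm_num
      · simp [hq, I_ne_one']
    · have hq : ¬ q = p := fun h => hca (by rw [h]; rfl)
      simp [hq, I_ne_one']
  · refine factor_zero (E2phase hinv p (Sum.inr p) a d b) ?_
    rcases a with q | q
    · have hq : ¬ q = p := fun h => hca (by rw [h]; rfl)
      simp [hq]
      intro h
      have := congrArg Complex.im h
      simp at this
    · by_cases hq : q = p
      · subst hq
        simp
        intro h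
        have := congrArg Complex.re h
        simp at this
        norm_num at this
      · simp [hq]
        intro h
        have := congrArg Complex.im h
        simp at this

lemma E2swap (p q : Fin N) (d b : nn N) :
    ∫ U, U (Sum.inl p) d * U (Sum.inr p) b ∂μ =
      ∫ U, U (Sum.inl q) d * U (Sum.inr q) b ∂μ := by
  have := constraint2 hinv (swapσ p q) 1 (swap_unitary p q) (swap_symp p q)
    (Sum.inl p) (Sum.inr p) d b
  simpa [swapσ, Equiv.swap_apply_left] using this

lemma E2flip (p : Fin N) (d b : nn N) :
    ∫ U, U (Sum.inl p) d * U (Sum.inr p) b ∂μ =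
      -∫ U, U (Sum.inr p) d * U (Sum.inl p) b ∂μ := by
  have := constraint2 hinv Iσ Iw Imat_unitary Imat_symp (Sum.inl p) (Sum.inr p) d b
  simpa using this

include hmem

set_option maxHeartbeats 1000000 in
lemma E2sum (d b : nn N) :
    ∑ c : nn N, ∑ a : nn N, Imat N c a * ∫ U, U c d * U a b ∂μ = Imat N d b := by
  have hswap : ∀ c a : nn N,
      Imat N c a * ∫ U, U c d * U a b ∂μ = ∫ U, Imat N c a * (U c d * U a b) ∂μ := by
    intro c a
    rw [MeasureTheory.integral_const_mul]
  have step1 : ∀ c : nn N, ∑ a : nn N, ∫ U, Imat N c a * (U c d * U a b) ∂μ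
      = ∫ U, ∑ a : nn N, Imat N c a * (U c d * U a b) ∂μ :=
    fun c => (integral_finset_sum _
      (fun a _ => (integrable_mul hmem c d a b).const_mul _)).symm
  simp only [hswap, step1]
  rw [← integral_finset_sum _ (f := fun (c : nn N) (U : Mat N) => ∑ a, Imat N c a * (U c d * U a b)) (fun c _ => integrable_finset_sum _
    (fun a _ => (integrable_mul hmem c d a b).const_mul _))]
  rw [integral_congr_ae (g := fun _ => Imat N d b)]
  · simp
  · filter_upwards [hmem] with U hU
    have h1 : (Uᵀ * Imat N * U) d b = Imat N d b := by rw [hU.2]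
    rw [Matrix.mul_assoc, Matrix.mul_apply] at h1
    rw [← h1]
    refine Finset.sum_congr rfl fun c _ => ?_
    rw [Matrix.transpose_apply, Matrix.mul_apply, Finset.mul_sum]
    refine Finset.sum_congr rfl fun a _ => ?_
    ring

lemma E2 (hN : 0 < N) (c a d b : nn N) :
    ∫ U, U c d * U a b ∂μ = Imat N c a * Imat N d b / (2 * N) := by
  have h2N : (2 * (N : ℂ)) ≠ 0 := by
    simp [Nat.cast_ne_zero]
    omega
  set p0 : Fin N := ⟨0, hN⟩
  set α : ℂ := ∫ U, U (Sum.inl p0) d * U (Sum.inr p0) b ∂μ with hα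
  have hconst : ∀ p : Fin N, ∫ U, U (Sum.inl p) d * U (Sum.inr p) b ∂μ = α :=
    fun p => E2swap hinv p p0 d b
  have hconst' : ∀ p : Fin N, ∫ U, U (Sum.inr p) d * U (Sum.inl p) b ∂μ = -α := by
    intro p
    have := E2flip hinv p d b
    rw [hconst p] at this
    linear_combination this
  have hsum := E2sum hinv hmem d b
  have hval : ∑ c : nn N, ∑ a : nn N, Imat N c a * ∫ U, U c d * U a b ∂μ
      = -(2 * N) * α := by
    rw [Fintype.sum_sum_type]
    have hL : ∀ p : Fin N, ∑ a : nn N, Imat N (Sum.inl p) a *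
        ∫ U, U (Sum.inl p) d * U a b ∂μ = -α := by
      intro p
      rw [Fintype.sum_sum_type]
      simp only [Imat_ll, Imat_lr, zero_mul, Finset.sum_const_zero, zero_add]
      rw [Finset.sum_eq_single p]
      · simp [hconst p]
      · intro q _ hqp
        simp [Ne.symm hqp]
      · simp
    have hR : ∀ p : Fin N, ∑ a : nn N, Imat N (Sum.inr p) a *
        ∫ U, U (Sum.inr p) d * U a b ∂μ = -α := by
      intro p
      rw [Fintype.sum_sum_type]
      simp only [Imat_rl, Imat_rr, zero_mul, Finset.sum_const_zero, add_zero]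
      rw [Finset.sum_eq_single p]
      · simp [hconst' p]
      · intro q _ hqp
        simp [Ne.symm hqp]
      · simp
    simp only [hL, hR, Finset.sum_const, Finset.card_univ, Fintype.card_fin]
    push_cast
    ring
  rw [hval] at hsum
  -- hsum : -(2N) α = Imat d b
  rcases c with p | p <;> rcases a with q | q
  · rw [E2off hinv (Sum.inl p) (Sum.inl q) d b (by simp)]
    simp
  · by_cases hq : q = p
    · subst hq
      rw [hconst q]
      simp only [Imat_lr, if_pos rfl, ↓reduceIte]
      rw [eq_div_iff h2N]
      linear_combination -hsum
    · rw [E2off hinv (Sum.inl p) (Sum.inr q) d b (by simp [hq])]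
      simp [hq, Ne.symm hq]
  · by_cases hq : q = p
    · subst hq
      rw [hconst' q]
      simp only [Imat_rl, if_pos rfl, ↓reduceIte]
      rw [eq_div_iff h2N]
      linear_combination hsum
    · rw [E2off hinv (Sum.inr p) (Sum.inl q) d b (by simp [hq])]
      simp [hq, Ne.symm hq]
  · rw [E2off hinv (Sum.inr p) (Sum.inr q) d b (by simp)]
    simp

lemma E3 (hN : 0 < N) (c a d b : nn N) :
    ∫ U, conj (U c d) * conj (U a b) ∂μ = Imat N c a * Imat N d b / (2 * N) := by
  have h : (fun U : Mat N => conj (U c d) * conj (U a b)) =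
      fun U : Mat N => conj (U c d * U a b) := by
    funext U
    rw [RingHom.map_mul]
  rw [h, integral_conj, E2 hinv hmem hN c a d b, map_div₀, RingHom.map_mul,
    Imat_conj, Imat_conj, RingHom.map_mul, map_ofNat, map_natCast]

omit hmem hinv

lemma trace_four (M1 M2 M3 M4 : Mat N) :
    (M1 * M2 * M3 * M4).trace =
      ∑ i, ∑ l, ∑ k, ∑ j, M1 i j * M2 j k * M3 k l * M4 l i := by
  simp only [Matrix.trace, Matrix.diag, Matrix.mul_apply, Finset.sum_mul]

lemma integral_sum4 (f : nn N → nn N → nn N → nn N → Mat N → ℂ)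
    (hf : ∀ i l k j, Integrable (f i l k j) μ) :
    ∫ U, ∑ i, ∑ l, ∑ k, ∑ j, f i l k j U ∂μ =
      ∑ i, ∑ l, ∑ k, ∑ j, ∫ U, f i l k j U ∂μ := by
  rw [integral_finset_sum _ (fun i _ => integrable_finset_sum _ (fun l _ =>
    integrable_finset_sum _ (fun k _ => integrable_finset_sum _ (fun j _ => hf i l k j))))]
  refine Finset.sum_congr rfl fun i _ => ?_
  rw [integral_finset_sum _ (fun l _ => integrable_finset_sum _
    (fun k _ => integrable_finset_sum _ (fun j _ => hf i l k j)))]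
  refine Finset.sum_congr rfl fun l _ => ?_
  rw [integral_finset_sum _ (fun k _ => integrable_finset_sum _ (fun j _ => hf i l k j))]
  refine Finset.sum_congr rfl fun k _ => ?_
  rw [integral_finset_sum _ (fun j _ => hf i l k j)]

lemma move3 (g : nn N → nn N → nn N → ℂ) :
    ∑ a, ∑ b, ∑ c, g a b c = ∑ c, ∑ a, ∑ b, g a b c := by
  rw [show (∑ a, ∑ b, ∑ c, g a b c) = ∑ a, ∑ c, ∑ b, g a b c from
    Finset.sum_congr rfl fun a _ => Finset.sum_comm]
  exact Finset.sum_comm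

lemma move4 (g : nn N → nn N → nn N → nn N → ℂ) :
    ∑ a, ∑ b, ∑ c, ∑ d, g a b c d = ∑ d, ∑ a, ∑ b, ∑ c, g a b c d := by
  rw [show (∑ a, ∑ b, ∑ c, ∑ d, g a b c d) = ∑ a, ∑ d, ∑ b, ∑ c, g a b c d from
    Finset.sum_congr rfl fun a _ => move3 (g a)]
  exact Finset.sum_comm

lemma Imat_conjTranspose : (Imat N)ᴴ = -Imat N := by
  ext a b
  rw [Matrix.conjTranspose_apply, Matrix.neg_apply]
  rw [show star (Imat N b a) = Imat N b a from Imat_conj b a]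
  rw [Imat_antisymm b a]

lemma sumIA (A : Mat N) : ∑ j, ∑ k, Imat N j k * A j k = -(Imat N * A).trace := by
  have h1 : ∑ j, ∑ k, Imat N j k * A j k = -∑ j, ∑ k, Imat N k j * A j k := by
    rw [← Finset.sum_neg_distrib]
    refine Finset.sum_congr rfl fun j _ => ?_
    rw [← Finset.sum_neg_distrib]
    refine Finset.sum_congr rfl fun k _ => ?_
    rw [Imat_antisymm j k]
    ring
  rw [h1, Finset.sum_comm]
  congr 1

lemma sumIB (B : Mat N) : ∑ i, ∑ l, Imat N i l * B l i = (Imat N * B).trace := by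
  simp [Matrix.trace, Matrix.diag, Matrix.mul_apply]

lemma alg3 (A B : Mat N) :
    ∑ i, ∑ l, ∑ k, ∑ j, A j k * B l i * (Imat N k i * Imat N l j) =
      (A * Imat N * Bᵀ * Imat N).trace := by
  rw [trace_four]
  rw [move4 (fun i l k j => A j k * B l i * (Imat N k i * Imat N l j))]
  refine Finset.sum_congr rfl fun j _ => ?_
  rw [Finset.sum_comm]
  refine Finset.sum_congr rfl fun l _ => Finset.sum_congr rfl fun i _ =>
    Finset.sum_congr rfl fun k _ => ?_
  rw [Matrix.transpose_apply]
  ring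

lemma sum_if_const (c : Prop) [Decidable c] (f : nn N → ℂ) :
    ∑ x : nn N, (if c then f x else 0) = if c then ∑ x, f x else 0 := by
  split_ifs <;> simp

lemma integrable_conj_mul (hmem : ∀ᵐ U ∂μ, Uᴴ * U = 1 ∧ Uᵀ * Imat N * U = Imat N)
    (a b c d : nn N) :
    Integrable (fun U : Mat N => conj (U a b) * conj (U c d)) μ := by
  refine integrable_two hmem
    (((Complex.continuous_conj.measurable.comp (meas_entry a b)) :
        Measurable fun U : Mat N => conj (U a b)).mul
      ((Complex.continuous_conj.measurable.comp (meas_entry c d)) :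
        Measurable fun U : Mat N => conj (U c d))) ?_
  filter_upwards [bound_mul hmem a b c d] with U h
  simpa [norm_mul] using h

section Statements

variable (hinv : ∀ S : Mat N, Sᴴ * S = 1 → Sᵀ * Imat N * S = Imat N →
      μ.map (fun U => S * U) = μ)
  (hmem : ∀ᵐ U ∂μ, Uᴴ * U = 1 ∧ Uᵀ * Imat N * U = Imat N)
  (hN : 0 < N) (A B : Mat N)

include hinv hmem hN

lemma st1 : ∫ U, (Uᴴ * A * U * B).trace ∂μ = (1 / (2 * (N : ℂ))) * (A.trace * B.trace) := by
  have expand : (fun U : Mat N => (Uᴴ * A * U * B).trace) =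
      fun U : Mat N => ∑ i, ∑ l, ∑ k, ∑ j, (A j k * B l i) * (U k l * conj (U j i)) := by
    funext U
    rw [trace_four]
    refine Finset.sum_congr rfl fun i _ => Finset.sum_congr rfl fun l _ =>
      Finset.sum_congr rfl fun k _ => Finset.sum_congr rfl fun j _ => ?_
    rw [Matrix.conjTranspose_apply, Complex.star_def]
    ring
  rw [expand,
    integral_sum4 _ (fun i l k j => ((integrable_mul_conj hmem k l j i).const_mul _))]
  have hval : ∀ i l k j : nn N, ∫ U, (A j k * B l i) * (U k l * conj (U j i)) ∂μ =
      (if k = j then (1 : ℂ) else 0) * ((if l = i then (1 : ℂ) else 0) *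
        (A j k * B l i / (2 * N))) := by
    intro i l k j
    rw [MeasureTheory.integral_const_mul, E1 hinv hmem hN k j l i]
    ring
  simp only [hval]
  simp only [ite_mul, one_mul, zero_mul, sum_if_const, Finset.sum_ite_eq, Finset.sum_ite_eq',
    Finset.mem_univ, if_true, Finset.sum_const_zero]
  rw [Finset.sum_comm]
  simp only [Matrix.trace, Matrix.diag]
  rw [Finset.sum_mul_sum, Finset.mul_sum]
  refine Finset.sum_congr rfl fun k _ => ?_
  rw [Finset.mul_sum]
  exact Finset.sum_congr rfl fun i _ => by ring

lemma st5 : ∫ U, (Uᴴᵀ * A * U * B).trace ∂μ = (1 / (2 * (N : ℂ))) * (A * Bᵀ).trace := by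
  have expand : (fun U : Mat N => (Uᴴᵀ * A * U * B).trace) =
      fun U : Mat N => ∑ i, ∑ l, ∑ k, ∑ j, (A j k * B l i) * (U k l * conj (U i j)) := by
    funext U
    rw [trace_four]
    refine Finset.sum_congr rfl fun i _ => Finset.sum_congr rfl fun l _ =>
      Finset.sum_congr rfl fun k _ => Finset.sum_congr rfl fun j _ => ?_
    rw [Matrix.transpose_apply, Matrix.conjTranspose_apply, Complex.star_def]
    ring
  rw [expand,
    integral_sum4 _ (fun i l k j => ((integrable_mul_conj hmem k l i j).const_mul _))]
  have hval : ∀ i l k j : nn N, ∫ U, (A j k * B l i) * (U k l * conj (U i j)) ∂μ =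
      (if k = i then (1 : ℂ) else 0) * ((if l = j then (1 : ℂ) else 0) *
        (A j k * B l i / (2 * N))) := by
    intro i l k j
    rw [MeasureTheory.integral_const_mul, E1 hinv hmem hN k i l j]
    ring
  simp only [hval]
  simp only [ite_mul, one_mul, zero_mul, sum_if_const, Finset.sum_ite_eq, Finset.sum_ite_eq',
    Finset.mem_univ, if_true, Finset.sum_const_zero]
  rw [Finset.sum_comm]
  simp only [Matrix.trace, Matrix.diag, Matrix.mul_apply, Matrix.transpose_apply]
  rw [Finset.mul_sum]
  refine Finset.sum_congr rfl fun l _ => ?_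
  rw [Finset.mul_sum]
  refine Finset.sum_congr rfl fun i _ => ?_
  ring

omit hinv hmem hN in
lemma sumIA' (A : Mat N) : ∑ k, ∑ j, Imat N j k * A j k = -(Imat N * A).trace := by
  rw [Finset.sum_comm]
  exact sumIA A

lemma st2 : ∫ U, (Uᵀ * A * U * B).trace ∂μ =
    (1 / (2 * (N : ℂ))) * ((Imat N * A).trace * ((Imat N)ᴴ * B).trace) := by
  have expand : (fun U : Mat N => (Uᵀ * A * U * B).trace) =
      fun U : Mat N => ∑ i, ∑ l, ∑ k, ∑ j, (A j k * B l i) * (U j i * U k l) := by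
    funext U
    rw [trace_four]
    refine Finset.sum_congr rfl fun i _ => Finset.sum_congr rfl fun l _ =>
      Finset.sum_congr rfl fun k _ => Finset.sum_congr rfl fun j _ => ?_
    rw [Matrix.transpose_apply]
    ring
  rw [expand,
    integral_sum4 _ (fun i l k j => ((integrable_mul hmem j i k l).const_mul _))]
  have hval : ∀ i l k j : nn N, ∫ U, (A j k * B l i) * (U j i * U k l) ∂μ =
      (Imat N j k * A j k) * (Imat N i l * B l i / (2 * N)) := by
    intro i l k j
    rw [MeasureTheory.integral_const_mul, E2 hinv hmem hN j k i l]
    ring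
  simp only [hval]
  have hfac : ∑ i : nn N, ∑ l : nn N, ∑ k : nn N, ∑ j : nn N,
      (Imat N j k * A j k) * (Imat N i l * B l i / (2 * (N : ℂ))) =
      (∑ k : nn N, ∑ j : nn N, Imat N j k * A j k) *
        ((∑ i : nn N, ∑ l : nn N, Imat N i l * B l i) / (2 * N)) := by
    simp only [Finset.sum_mul, Finset.mul_sum, Finset.sum_div]

  rw [hfac, sumIA' A, sumIB B, Imat_conjTranspose, Matrix.neg_mul, Matrix.trace_neg]
  ring

lemma st3 : ∫ U, (U * A * U * B).trace ∂μ =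
    (1 / (2 * (N : ℂ))) * (A * Imat N * Bᵀ * Imat N).trace := by
  have expand : (fun U : Mat N => (U * A * U * B).trace) =
      fun U : Mat N => ∑ i, ∑ l, ∑ k, ∑ j, (A j k * B l i) * (U k l * U i j) := by
    funext U
    rw [trace_four]
    refine Finset.sum_congr rfl fun i _ => Finset.sum_congr rfl fun l _ =>
      Finset.sum_congr rfl fun k _ => Finset.sum_congr rfl fun j _ => ?_
    ring
  rw [expand,
    integral_sum4 _ (fun i l k j => ((integrable_mul hmem k l i j).const_mul _))]
  have hval : ∀ i l k j : nn N, ∫ U, (A j k * B l i) * (U k l * U i j) ∂μ =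
      (A j k * B l i * (Imat N k i * Imat N l j)) / (2 * N) := by
    intro i l k j
    rw [MeasureTheory.integral_const_mul, E2 hinv hmem hN k i l j]
    ring
  simp only [hval]
  simp only [← Finset.sum_div]
  rw [alg3 A B]
  ring

lemma st4 : ∫ U, (Uᴴ * A * Uᴴ * B).trace ∂μ =
    (1 / (2 * (N : ℂ))) * (A * Imat N * Bᵀ * Imat N).trace := by
  have expand : (fun U : Mat N => (Uᴴ * A * Uᴴ * B).trace) =
      fun U : Mat N => ∑ i, ∑ l, ∑ k, ∑ j,
        (A j k * B l i) * (conj (U j i) * conj (U l k)) := by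
    funext U
    rw [trace_four]
    refine Finset.sum_congr rfl fun i _ => Finset.sum_congr rfl fun l _ =>
      Finset.sum_congr rfl fun k _ => Finset.sum_congr rfl fun j _ => ?_
    simp only [Matrix.conjTranspose_apply, Complex.star_def]
    ring
  rw [expand,
    integral_sum4 _ (fun i l k j => ((integrable_conj_mul hmem j i l k).const_mul _))]
  have hval : ∀ i l k j : nn N, ∫ U, (A j k * B l i) * (conj (U j i) * conj (U l k)) ∂μ =
      (A j k * B l i * (Imat N k i * Imat N l j)) / (2 * N) := by
    intro i l k j
    rw [MeasureTheory.integral_const_mul, E3 hinv hmem hN j l i k]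
    rw [Imat_antisymm j l, Imat_antisymm i k]
    ring
  simp only [hval]
  simp only [← Finset.sum_div]
  rw [alg3 A B]
  ring

end Statements

end Moments

end SympAux

/-- For any `2N×2N` complex matrices `A` and `B`, the averages over the compact symplectic
group `SP(2N)` (unitary matrices with `UᵗIU = I`) with respect to normalized Haar measure
satisfy `⟨Tr(U*AUB)⟩ = (1/(2N))·Tr(A)·Tr(B)`, `⟨Tr(UᵗAUB)⟩ = (1/(2N))·Tr(IA)·Tr(I*B)`,
`⟨Tr(UAUB)⟩ = ⟨Tr(U*AU*B)⟩ = (1/(2N))·Tr(A·I·Bᵗ·I)` and `⟨Tr(ŪAUB)⟩ = (1/(2N))·Tr(A·Bᵗ)`. -/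
theorem symplectic_second_moments (N : ℕ)
    (A B : Matrix (Fin N ⊕ Fin N) (Fin N ⊕ Fin N) ℂ)
    (μ : Measure (Matrix (Fin N ⊕ Fin N) (Fin N ⊕ Fin N) ℂ)) [IsProbabilityMeasure μ]
    (hmem : ∀ᵐ U ∂μ, Uᴴ * U = 1 ∧ Uᵀ * Imat N * U = Imat N)
    (hinv : ∀ S : Matrix (Fin N ⊕ Fin N) (Fin N ⊕ Fin N) ℂ,
      Sᴴ * S = 1 → Sᵀ * Imat N * S = Imat N → μ.map (fun U => S * U) = μ) :
    (∫ U, (Uᴴ * A * U * B).trace ∂μ = (1 / (2 * (N : ℂ))) * (A.trace * B.trace)) ∧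
    (∫ U, (Uᵀ * A * U * B).trace ∂μ =
      (1 / (2 * (N : ℂ))) * ((Imat N * A).trace * ((Imat N)ᴴ * B).trace)) ∧
    (∫ U, (U * A * U * B).trace ∂μ = (1 / (2 * (N : ℂ))) * (A * Imat N * Bᵀ * Imat N).trace) ∧
    (∫ U, (Uᴴ * A * Uᴴ * B).trace ∂μ =
      (1 / (2 * (N : ℂ))) * (A * Imat N * Bᵀ * Imat N).trace) ∧
    (∫ U, (Uᴴᵀ * A * U * B).trace ∂μ = (1 / (2 * (N : ℂ))) * (A * Bᵀ).trace) := by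
  
  rcases Nat.eq_zero_or_pos N with hN | hN
  · subst hN
    refine ⟨?_, ?_, ?_, ?_, ?_⟩ <;> simp [Matrix.trace]
  · exact ⟨SympAux.st1 hinv hmem hN A B, SympAux.st2 hinv hmem hN A B,
      SympAux.st3 hinv hmem hN A B, SympAux.st4 hinv hmem hN A B,
      SympAux.st5 hinv hmem hN A B⟩
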